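/- (Characterization of the zero-diffusion line.) Assume Δz_{i+1/2} ≠ 0, set a = 1 - θ_i^+ and b = 1 - θ_{i+1}^-, and assume a + b ≠ 0. Then the reconstructed jump vanishes, ⟦z⟧_{i+1/2} = 0, if and only if ℒ = 1, i.e. if and only if (C_1, C_2) lies on the line 8(C_1·a + C_2·b) = a + b. -/

import Mathlib

/-- Characterization of the zero-diffusion line: with
`a = 1 - θ⁺_i`, `b = 1 - θ⁻_{i+1}`, `a + b ≠ 0`, and
`ℒ = 8(C₁a + C₂b)/(a + b)`, the reconstructed jump vanishes iff `ℒ = 1`,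
i.e. iff `(C₁, C₂)` lies on the line `8(C₁a + C₂b) = a + b`. -/
theorem sp_weno_zero_jump_iff (zm z0 z1 z2 C1 C2 a b L : ℝ) (hΔ : z1 - z0 ≠ 0)
    (ha : a = 1 - (z0 - zm)/(z1 - z0)) (hb : b = 1 - (z2 - z1)/(z1 - z0))
    (hab : a + b ≠ 0) (hL : L = 8*(C1*a + C2*b)/(a + b)) :
    (((1/4 - 2*C2)*(3*z1 - z2) + (3/4 + 2*C2)*(z0 + z1))/2
        - ((3/4 + 2*C1)*(z0 + z1) + (1/4 - 2*C1)*(3*z0 - zm))/2 = 0 ↔ L = 1) ∧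
    (((1/4 - 2*C2)*(3*z1 - z2) + (3/4 + 2*C2)*(z0 + z1))/2
        - ((3/4 + 2*C1)*(z0 + z1) + (1/4 - 2*C1)*(3*z0 - zm))/2 = 0
      ↔ 8*(C1*a + C2*b) = a + b) := by
  have key : (((1/4 - 2*C2)*(3*z1 - z2) + (3/4 + 2*C2)*(z0 + z1))/2
        - ((3/4 + 2*C1)*(z0 + z1) + (1/4 - 2*C1)*(3*z0 - zm))/2 = 0
      ↔ 8*(C1*a + C2*b) = a + b) := by
    subst ha hb
    rw [div_sub_div_same, div_eq_zero_iff, sub_eq_zero]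
    field_simp
    ring_nf
    simp only [two_ne_zero, or_false]
    constructor <;> intro h <;> linarith
  refine ⟨key.trans ?_, key⟩
  rw [hL, div_eq_one_iff_eq hab]
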